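/- Let p be a prime number, let Γ be a group, and let N be a normal subgroup of Γ such that the quotient group Γ/N has bounded finite subgroups (i.e., there exists a constant B such that every finite subgroup of Γ/N has order at most B). Suppose that N is p-Jordan, i.e., there exist constants J and e such that every finite subgroup G' of N contains a normal abelian subgroup of order coprime to p and index at most J·|G'_p|^e, where G'_p is a p-Sylow subgroup of G'. Then Γ is p-Jordan: there exist constants J' and e' such that every finite subgroup G of Γ contains a normal abelian subgroup of order coprime to p and index at most J'·|G_p|^{e'}, where G_p is a p-Sylow subgroup of G. -/

import Mathlib

open Subgroup

/-- If `N` is a normal subgroup of `Γ` such that `Γ/N` has bounded finite subgroups and `N`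
is `p`-Jordan, then `Γ` is `p`-Jordan. -/
theorem p_jordan_of_normal_p_jordan_quotient_bounded
    (p : ℕ) (hp : p.Prime)
    (Γ : Type*) [Group Γ] (N : Subgroup Γ) (hN : N.Normal)
    (hbound : ∃ B : ℕ, ∀ Q : Subgroup (Γ ⧸ N), Finite Q → Nat.card Q ≤ B)
    (hpJordan : ∃ J e : ℕ, 0 < J ∧ ∀ G' : Subgroup ↥N, Finite G' →
      ∀ G'p : Sylow p ↥G',
        ∃ A : Subgroup ↥G', A.Normal ∧ IsMulCommutative A ∧
          Nat.Coprime (Nat.card A) p ∧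
          A.index ≤ J * (Nat.card G'p) ^ e) :
    ∃ J' e' : ℕ, 0 < J' ∧ ∀ G : Subgroup Γ, Finite G →
      ∀ Gp : Sylow p ↥G,
        ∃ A : Subgroup ↥G, A.Normal ∧ IsMulCommutative A ∧
          Nat.Coprime (Nat.card A) p ∧
          A.index ≤ J' * (Nat.card Gp) ^ e' := by
  haveI := Fact.mk hp
  obtain ⟨B, hB⟩ := hbound
  obtain ⟨J, e, hJ, hJordan⟩ := hpJordan
  refine ⟨(J * B + 1) ^ B, e * B, pow_pos (Nat.succ_pos _) B, ?_⟩
  intro G hG Gp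
  haveI := hG
  -- `K` is the image of `N` in `G`, i.e. the kernel of `G → Γ ⧸ N`.
  set ψ : ↥G →* Γ ⧸ N := (QuotientGroup.mk' N).comp G.subtype with hψ
  set K : Subgroup ↥G := ψ.ker with hKdef
  have hmemK : ∀ x : ↥G, x ∈ K ↔ (x : Γ) ∈ N := by
    intro x
    simp [hKdef, hψ, MonoidHom.mem_ker, QuotientGroup.eq_one_iff]
  -- the index of `K` in `G` is at most `B`
  haveI : Finite ψ.range := Finite.of_surjective _ ψ.rangeRestrict_surjective
  have hn : K.index ≤ B := by
    have h1 : K.index = Nat.card ψ.range :=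
      Nat.card_congr (QuotientGroup.quotientKerEquivRange ψ).toEquiv
    rw [h1]; exact hB _ inferInstance
  -- `G'` is `G ∩ N` viewed as a subgroup of `N`, with the embedding `φ : G' →* G`
  set G' : Subgroup ↥N := G.comap N.subtype with hG'def
  let φ : ↥G' →* ↥G :=
    { toFun := fun x => ⟨((x : ↥N) : Γ), x.2⟩
      map_one' := rfl
      map_mul' := fun _ _ => rfl }
  have hφval : ∀ x : ↥G', ((φ x : ↥G) : Γ) = ((x : ↥N) : Γ) := fun _ => rfl
  have hφinj : Function.Injective φ := by
    intro a b h
    have h2 := congrArg (fun z : ↥G => (z : Γ)) h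
    exact Subtype.ext (Subtype.ext h2)
  have hrange : φ.range = K := by
    ext x
    constructor
    · rintro ⟨a, rfl⟩
      exact (hmemK _).mpr (a : ↥N).2
    · intro hx
      exact ⟨⟨⟨(x : Γ), (hmemK x).mp hx⟩, x.2⟩, rfl⟩
  haveI : Finite ↥G' := Finite.of_injective φ hφinj
  have hcardK : Nat.card G' = Nat.card K := by
    have h1 : Nat.card G' = Nat.card φ.range :=
      Nat.card_congr (MonoidHom.ofInjective hφinj).toEquiv
    rw [h1, hrange]
  -- apply the Jordan property of `N` to `G'`
  let G'p : Sylow p ↥G' := Classical.arbitrary _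
  obtain ⟨A', hA'norm, hA'comm, hA'cop, hA'idx⟩ := hJordan G' inferInstance G'p
  set A : Subgroup ↥G := A'.map φ with hAdef
  have hcardA : Nat.card A = Nat.card A' :=
    (Nat.card_congr (Subgroup.equivMapOfInjective A' φ hφinj).toEquiv).symm
  haveI hAcomm : IsMulCommutative A := by
    haveI := hA'comm
    exact Subgroup.map_isMulCommutative A' φ
  have hAK : A ≤ K := by
    rintro x ⟨a, _, rfl⟩
    exact (hmemK _).mpr (a : ↥N).2
  -- `A` is stable under conjugation by elements of `K`
  have hstab : ∀ k ∈ K, ∀ a ∈ A, k * a * k⁻¹ ∈ A := by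
    intro k hk a ha
    obtain ⟨k', rfl⟩ : k ∈ φ.range := hrange ▸ hk
    obtain ⟨a', ha', rfl⟩ := ha
    have : φ k' * φ a' * (φ k')⁻¹ = φ (k' * a' * k'⁻¹) := by
      rw [map_mul, map_mul, map_inv]
    rw [this]
    exact Subgroup.mem_map_of_mem φ (hA'norm.conj_mem a' ha' k')
  have hiff : ∀ k ∈ K, ∀ x : ↥G, k⁻¹ * x * k ∈ A ↔ x ∈ A := by
    intro k hk x
    constructor
    · intro h
      have := hstab k hk _ h
      have hx : k * (k⁻¹ * x * k) * k⁻¹ = x := by group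
      rwa [hx] at this
    · intro h
      have := hstab k⁻¹ (inv_mem hk) x h
      rwa [inv_inv] at this
  -- conjugates of `A`
  let c : ↥G → Subgroup ↥G := fun g => A.map (MulAut.conj g).toMonoidHom
  have hc : ∀ g x, x ∈ c g ↔ g⁻¹ * x * g ∈ A := by
    intro g x
    rw [Subgroup.mem_map_equiv, MulAut.conj_symm_apply]
  have hfact : ∀ g k, k ∈ K → c (g * k) = c g := by
    intro g k hk
    ext x
    rw [hc, hc]
    have h1 : (g * k)⁻¹ * x * (g * k) = k⁻¹ * (g⁻¹ * x * g) * k := by group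
    rw [h1, hiff k hk]
  -- the conjugates factor through the quotient `G ⧸ K`
  let f : ↥G ⧸ K → Subgroup ↥G := Quotient.lift c (by
    intro a b hab
    have h : a⁻¹ * b ∈ K := (QuotientGroup.leftRel_apply).mp hab
    have h2 := hfact a (a⁻¹ * b) h
    rw [mul_inv_cancel_left] at h2
    exact h2.symm)
  have hf : ∀ g : ↥G, f (QuotientGroup.mk g) = c g := fun _ => rfl
  set C : Subgroup ↥G := ⨅ q, f q with hCdef
  have hmemC : ∀ x, x ∈ C ↔ ∀ g : ↥G, x ∈ c g := by
    intro x
    rw [hCdef, Subgroup.mem_iInf]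
    constructor
    · intro h g
      have := h (QuotientGroup.mk g)
      rwa [hf] at this
    · intro h q
      refine Quotient.inductionOn q ?_
      intro g
      exact h g
  have hc1 : c 1 = A := by
    ext x
    rw [hc]
    simp
  have hCle : C ≤ A := by
    intro x hx
    have := (hmemC x).mp hx 1
    rwa [hc1] at this
  -- `C` is normal
  have hCnormal : C.Normal := by
    constructor
    intro x hx g
    refine (hmemC _).mpr fun h => ?_
    rw [hc]
    have hx' := (hmemC x).mp hx (g⁻¹ * h)
    rw [hc] at hx'
    have heq : h⁻¹ * (g * x * g⁻¹) * h = (g⁻¹ * h)⁻¹ * x * (g⁻¹ * h) := by group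
    rwa [heq]
  -- `C` is commutative
  have hCcomm : IsMulCommutative C := by
    constructor
    constructor
    intro a b
    exact Subtype.ext (Subgroup.mul_comm_of_mem_isMulCommutative A (hCle a.2) (hCle b.2))
  -- `C` has order coprime to `p`
  have hCcop : Nat.Coprime (Nat.card C) p := by
    refine Nat.Coprime.coprime_dvd_left ?_ hA'cop
    rw [← hcardA]
    exact Subgroup.card_dvd_of_le hCle
  -- cardinality facts
  have hcardApos : 0 < Nat.card A := Nat.card_pos
  -- every conjugate of `A` has the same index as `A`
  have hcidx : ∀ g : ↥G, (c g).index = A.index := by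
    intro g
    have hcard : Nat.card (c g) = Nat.card A :=
      (Nat.card_congr (Subgroup.equivMapOfInjective A _
        (MulAut.conj g).injective).toEquiv).symm
    have h1 : Nat.card (c g) * (c g).index = Nat.card ↥G := Subgroup.card_mul_index _
    have h2 : Nat.card A * A.index = Nat.card ↥G := Subgroup.card_mul_index _
    rw [hcard] at h1
    exact Nat.eq_of_mul_eq_mul_left hcardApos (h1.trans h2.symm)
  -- index of `C` at most `A.index ^ K.index`
  haveI : Fintype (↥G ⧸ K) := Fintype.ofFinite _
  have hCidx : C.index ≤ A.index ^ K.index := by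
    calc C.index ≤ ∏ q, (f q).index := Subgroup.index_iInf_le f
      _ = ∏ _q : ↥G ⧸ K, A.index := by
          refine Finset.prod_congr rfl fun q _ => ?_
          refine Quotient.inductionOn q ?_
          intro g
          rw [hf, hcidx]
      _ = A.index ^ K.index := by
          rw [Finset.prod_const, Finset.card_univ, ← Nat.card_eq_fintype_card]
          rfl
  -- index of `A` in terms of index of `A'`
  have hAidx : A.index = A'.index * K.index := by
    have h1 : Nat.card A * A.index = Nat.card ↥G := Subgroup.card_mul_index _
    have h2 : Nat.card A' * A'.index = Nat.card G' := Subgroup.card_mul_index _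
    have h3 : Nat.card K * K.index = Nat.card ↥G := Subgroup.card_mul_index _
    have h4 : Nat.card A * (A'.index * K.index) = Nat.card ↥G := by
      rw [hcardA, ← mul_assoc, h2, hcardK, h3]
    exact Nat.eq_of_mul_eq_mul_left hcardApos (h1.trans h4.symm)
  -- comparison of Sylow cardinalities
  have hsyl : Nat.card G'p ≤ Nat.card Gp := by
    rw [Sylow.card_eq_multiplicity, Sylow.card_eq_multiplicity]
    have hd : Nat.card G' ∣ Nat.card ↥G := by
      rw [hcardK]; exact Subgroup.card_subgroup_dvd_card K
    have hne : Nat.card G' ≠ 0 := Nat.card_pos.ne'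
    have hne' : Nat.card ↥G ≠ 0 := Nat.card_pos.ne'
    have hle := (Nat.factorization_le_iff_dvd hne hne').mpr hd
    exact Nat.pow_le_pow_right hp.pos (hle p)
  -- putting the index bound together
  refine ⟨C, hCnormal, hCcomm, hCcop, ?_⟩
  have hbase : A.index ≤ (J * B + 1) * Nat.card Gp ^ e := by
    calc A.index = A'.index * K.index := hAidx
      _ ≤ (J * Nat.card G'p ^ e) * B := Nat.mul_le_mul hA'idx hn
      _ ≤ (J * Nat.card Gp ^ e) * B :=
          Nat.mul_le_mul_right _ (Nat.mul_le_mul_left _ (Nat.pow_le_pow_left hsyl e))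
      _ = (J * B) * Nat.card Gp ^ e := by ring
      _ ≤ (J * B + 1) * Nat.card Gp ^ e :=
          Nat.mul_le_mul_right _ (Nat.le_succ _)
  calc C.index ≤ A.index ^ K.index := hCidx
    _ ≤ ((J * B + 1) * Nat.card Gp ^ e) ^ K.index := Nat.pow_le_pow_left hbase _
    _ ≤ ((J * B + 1) * Nat.card Gp ^ e) ^ B := by
        refine Nat.pow_le_pow_right ?_ hn
        exact Nat.one_le_iff_ne_zero.mpr (Nat.mul_ne_zero (Nat.succ_ne_zero _)
          (pow_pos Nat.card_pos e).ne')
    _ = (J * B + 1) ^ B * Nat.card Gp ^ (e * B) := by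
        rw [mul_pow, ← pow_mul]
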